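/- Let G be a connected graph with chromatic number χ and let c be a nice χ-coloring of G (D_c acyclic with a unique sink). Then the height of the level partition of D_c is at least 2χ - 1. -/

import Mathlib

/-- A directed cycle: a closed walk of positive length in the digraph `D`. -/
def HasDCycle {V : Type} (D : V → V → Prop) : Prop :=
  ∃ (x : V) (l : List V), List.Chain D x (l ++ [x])

/-- `x` lies in the `i`-th level of the level partition of the (acyclic)
digraph `D`: the longest directed path starting at `x` has `i` vertices. -/
def InLevel {V : Type} (D : V → V → Prop) (x : V) (i : ℕ) : Prop :=
  (∃ l : List V, l.Chain' D ∧ l.head? = some x ∧ l.length = i) ∧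
  ¬ (∃ l : List V, l.Chain' D ∧ l.head? = some x ∧ l.length = i + 1)

/-- Chains in an acyclic digraph have no duplicates. -/
lemma chain'_nodup {V : Type} {D : V → V → Prop} (hacyc : ¬ HasDCycle D) :
    ∀ l : List V, l.Chain' D → l.Nodup := by
  intro l
  induction l with
  | nil => intro _; simp
  | cons a t ih =>
    intro hl
    rw [List.Chain', List.isChain_cons] at hl
    by_cases ha : a ∈ t
    · exfalso
      obtain ⟨s, u, rfl⟩ := List.append_of_mem ha
      apply hacyc
      refine ⟨a, s, ?_⟩
      have hpre : (a :: (s ++ [a])) <+: (a :: (s ++ a :: u)) := by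
        refine ⟨u, ?_⟩
        simp
      have : List.Chain' D (a :: (s ++ a :: u)) := by
        rw [List.Chain', List.isChain_cons]; exact hl
      exact this.prefix hpre
    · simp only [List.nodup_cons]
      exact ⟨ha, ih hl.2⟩

/-- Along an arc-chain the colour increases by one each step. -/
lemma chain_color {V : Type} {χ : ℕ} (G : SimpleGraph V) (c : V → ZMod χ) :
    ∀ (l : List V) (x : V),
      List.Chain (fun a b => G.Adj a b ∧ c b = c a + 1) x l →
      c ((x :: l).getLast (List.cons_ne_nil _ _)) = c x + l.length := by
  intro l
  induction l with
  | nil => intro x _; simp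
  | cons b t ih =>
    intro x hl
    rw [List.Chain, List.chain_cons] at hl
    have h1 := ih b hl.2
    have : ((x :: b :: t).getLast (List.cons_ne_nil _ _)) =
        ((b :: t).getLast (List.cons_ne_nil _ _)) := by
      rw [List.getLast_cons (List.cons_ne_nil _ _)]
    rw [this, h1, hl.1.2, List.length_cons]
    push_cast
    ring

/-- For a nice `χ`-coloring of `G`, the height of the level partition of
`D_c` is at least `2χ - 1`. -/
theorem nice_coloring_height {V : Type} [Fintype V] (G : SimpleGraph V)
    (hG : G.Connected) (χ : ℕ) (hχ : G.chromaticNumber = χ)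
    (c : V → ZMod χ) (hc : ∀ u w, G.Adj u w → c u ≠ c w)
    (hacyc : ¬ HasDCycle (fun a b => G.Adj a b ∧ c b = c a + 1))
    (r : V) (hr : ∀ y, ¬ (G.Adj r y ∧ c y = c r + 1))
    (hru : ∀ x, (∀ y, ¬ (G.Adj x y ∧ c y = c x + 1)) → x = r) :
    ∃ (x : V) (i : ℕ), 2 * χ - 1 ≤ i ∧
      InLevel (fun a b => G.Adj a b ∧ c b = c a + 1) x i := by
  classical
  set D : V → V → Prop := fun a b => G.Adj a b ∧ c b = c a + 1 with hD
  set P : V → ℕ → Prop := fun x n =>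
    ∃ l : List V, l.Chain' D ∧ l.head? = some x ∧ l.length = n with hP
  set M : V → ℕ := fun x => Nat.findGreatest (P x) (Fintype.card V) with hM
  have hcard : 1 ≤ Fintype.card V := Fintype.card_pos_iff.mpr ⟨r⟩
  have hP1 : ∀ x, P x 1 := fun x => ⟨[x], by simp [List.Chain']⟩
  have hbound : ∀ x n, P x n → n ≤ Fintype.card V := by
    rintro x n ⟨l, hl, _, rfl⟩
    exact (chain'_nodup hacyc l hl).length_le_card
  have hM1 : ∀ x, 1 ≤ M x := fun x => Nat.le_findGreatest hcard (hP1 x)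
  have hMP : ∀ x, P x (M x) := fun x => Nat.findGreatest_spec hcard (hP1 x)
  have hMnot : ∀ x, ¬ P x (M x + 1) := by
    intro x hp
    exact Nat.findGreatest_is_greatest (Nat.lt_succ_self _) (hbound x _ hp) hp
  have hInLevel : ∀ x, InLevel D x (M x) := fun x => ⟨hMP x, hMnot x⟩
  -- arcs decrease the level
  have arcM : ∀ a b, D a b → M b + 1 ≤ M a := by
    intro a b hab
    obtain ⟨l, hl, hh, hlen⟩ := hMP b
    have hchain : List.Chain' D (a :: l) := by
      rw [List.Chain', List.isChain_cons]
      exact ⟨fun y hy => by rw [hh] at hy; cases hy; exact hab, hl⟩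
    have hPa : P a (M b + 1) := ⟨a :: l, hchain, rfl, by simp [hlen]⟩
    exact Nat.le_findGreatest (hbound a _ hPa) hPa
  -- colour identity: c x + M x = c r + 1
  have hkey : ∀ x, c x + (M x : ZMod χ) = c r + 1 := by
    intro x
    obtain ⟨l, hl, hh, hlen⟩ := hMP x
    obtain ⟨t, rfl⟩ : ∃ t, l = x :: t := by
      cases l with
      | nil => simp at hh
      | cons a t => simp at hh; exact ⟨t, by rw [hh]⟩
    have hchain : List.Chain D x t := List.isChain_cons.mp hl |>.2 |> (fun _ => hl)
      |> (fun _ => (List.isChain_cons.mp hl).2) |> (fun _ => by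
        have := hl; rwa [show List.Chain' D (x :: t) ↔ List.Chain D x t from Iff.rfl] at this)
    set y := (x :: t).getLast (List.cons_ne_nil _ _) with hy
    have hcy : c y = c x + t.length := chain_color G c t x hchain
    have hyr : y = r := by
      by_contra hne
      have : ¬ (∀ z, ¬ (G.Adj y z ∧ c z = c y + 1)) := fun h => hne (hru y h)
      push_neg at this
      obtain ⟨z, hz1, hz2⟩ := this
      have hchain2 : List.Chain' D ((x :: t) ++ [z]) := by
        refine hl.append (by simp) ?_
        intro p hp q hq
        simp only [List.getLast?_eq_getLast (List.cons_ne_nil _ _), Option.mem_def,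
          Option.some.injEq] at hp
        simp only [List.head?_cons, Option.mem_def, Option.some.injEq] at hq
        subst hp; subst hq
        exact ⟨hz1, hz2⟩
      have hPx : P x (M x + 1) := ⟨(x :: t) ++ [z], hchain2, by simp, by
        simp [← hlen]⟩
      exact hMnot x hPx
    have hlt : (t.length : ZMod χ) + 1 = (M x : ZMod χ) := by
      have : t.length + 1 = M x := by simpa using hlen
      exact_mod_cast congrArg (Nat.cast : ℕ → ZMod χ) this
    rw [hyr] at hcy
    rw [hcy, ← hlt]; ring
  by_cases hex : ∃ x, 2 * χ - 1 ≤ M x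
  · obtain ⟨x, hx⟩ := hex
    exact ⟨x, M x, hx, hInLevel x⟩
  push_neg at hex
  exfalso
  have hχ2 : 2 ≤ χ := by have h1 := hM1 r; have h2 := hex r; omega
  have hub : ∀ x, M x ≤ 2 * χ - 2 := fun x => by have := hex x; omega
  -- the key edge lemma
  have key : ∀ u v, G.Adj u v → M v ≤ M u → (M u - 1) % (χ - 1) ≠ (M v - 1) % (χ - 1) := by
    intro u v huv hle heq
    have hdvd : (χ - 1) ∣ (M u - 1) - (M v - 1) :=
      (Nat.modEq_iff_dvd' (by omega)).mp heq.symm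
    have hsub : (M u - 1) - (M v - 1) = M u - M v := by
      have := hM1 v; omega
    rw [hsub] at hdvd
    obtain ⟨k, hk⟩ := hdvd
    have hd : M u - M v ≤ 2 * χ - 3 := by
      have := hub u; have := hM1 v; omega
    have hk1 : k = 0 ∨ k = 1 := by
      rcases Nat.lt_or_ge k 2 with h | h
      · omega
      · exfalso
        have : (χ - 1) * 2 ≤ (χ - 1) * k := Nat.mul_le_mul_left _ h
        omega
    have hcuv : c u + (M u : ZMod χ) = c v + (M v : ZMod χ) := by
      rw [hkey u, hkey v]
    rcases hk1 with rfl | rfl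
    · -- M u = M v, so c u = c v, contradiction
      have hMeq : M u = M v := by omega
      rw [hMeq] at hcuv
      exact hc u v huv (by linear_combination hcuv)
    · -- M u = M v + (χ - 1); then c u = c v + 1, arc v → u, contradiction
      have hMeq : M u = M v + (χ - 1) := by omega
      have hcast : ((χ - 1 : ℕ) : ZMod χ) = -1 := by
        have h1 : ((χ - 1 : ℕ) : ZMod χ) = (χ : ZMod χ) - 1 := by
          push_cast [Nat.cast_sub (by omega : 1 ≤ χ)]; ring
        rw [h1, ZMod.natCast_self]; ring
      have hMcast : (M u : ZMod χ) = (M v : ZMod χ) - 1 := by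
        rw [hMeq]; push_cast [hcast]; ring
      rw [hMcast] at hcuv
      have hcu : c u = c v + 1 := by linear_combination hcuv
      have harc : D v u := ⟨huv.symm, hcu⟩
      have := arcM v u harc
      omega
  -- build a proper (χ-1)-coloring
  have hcol : G.Colorable (χ - 1) := by
    refine ⟨SimpleGraph.Coloring.mk
      (fun x => ⟨(M x - 1) % (χ - 1), Nat.mod_lt _ (by omega)⟩) ?_⟩
    intro u v huv heq
    rw [Fin.mk.injEq] at heq
    rcases le_total (M v) (M u) with h | h
    · exact key u v huv h heq
    · exact key v u huv.symm h heq.symm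
  have hle : G.chromaticNumber ≤ (χ - 1 : ℕ) := hcol.chromaticNumber_le
  rw [hχ] at hle
  have : χ ≤ χ - 1 := by exact_mod_cast hle
  omega
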